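/- arXiv:1411.2620 — 3 statements merged into one kernel-verified Lean document; each statement's English description precedes it below -/
import Mathlib

section
/- Let γ > 0, p > 5 and ω > γ²/4. Assume E(φ_ω) > 0 and S_ω(φ_ω) = d(ω). Then for every v ∈ 𝓑_ω one has E(φ_ω) ≤ E(v) - P(v). -/
open MeasureTheory Set
open scoped ENNReal

noncomputable section

/-- Inverse hyperbolic tangent. -/
def artanh (x : ℝ) : ℝ := Real.log ((1 + x) / (1 - x)) / 2

/-- Squared `L²` norm of `v`. -/
def l2Sq (v : ℝ → ℂ) : ℝ := ∫ x : ℝ, ‖v x‖ ^ 2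

/-- Squared `L²` norm of the derivative of `v`. -/
def gradSq (v : ℝ → ℂ) : ℝ := ∫ x : ℝ, ‖deriv v x‖ ^ 2

/-- `∫ |v|^(p+1)`, i.e. `‖v‖_{L^{p+1}}^{p+1}`. -/
def lpPow (p : ℝ) (v : ℝ → ℂ) : ℝ := ∫ x : ℝ, ‖v x‖ ^ (p + 1)

/-- `v ∈ H¹(ℝ)`, expressed via its continuous representative: `v` is square
integrable, absolutely continuous with a.e. derivative `deriv v`, which is
square integrable. -/
def MemH1 (v : ℝ → ℂ) : Prop :=
  Continuous v ∧ MemLp v 2 volume ∧ MemLp (deriv v) 2 volume ∧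
    ∀ x : ℝ, v x = v 0 + ∫ t in (0:ℝ)..x, deriv v t

/-- The energy functional `E`. -/
def En (γ p : ℝ) (v : ℝ → ℂ) : ℝ :=
  gradSq v / 2 - γ / 2 * ‖v 0‖ ^ 2 - lpPow p v / (p + 1)

/-- The Nehari functional `K_ω`. -/
def Kfun (γ p ω : ℝ) (v : ℝ → ℂ) : ℝ :=
  gradSq v + ω * l2Sq v - γ * ‖v 0‖ ^ 2 - lpPow p v

/-- The virial functional `P`. -/
def Pfun (γ p : ℝ) (v : ℝ → ℂ) : ℝ :=
  gradSq v - γ / 2 * ‖v 0‖ ^ 2 - (p - 1) / (2 * (p + 1)) * lpPow p v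

/-- The action functional `S_ω`. -/
def Sfun (γ p ω : ℝ) (v : ℝ → ℂ) : ℝ := En γ p v + ω / 2 * l2Sq v

/-- The minimal action `d(ω)` on the Nehari manifold. -/
def dInf (γ p ω : ℝ) : ℝ :=
  sInf {s : ℝ | ∃ v : ℝ → ℂ, MemH1 v ∧ v ≠ 0 ∧ Kfun γ p ω v = 0 ∧ s = Sfun γ p ω v}

/-- The explicit standing wave profile `φ_ω`. -/
def phi (γ p ω : ℝ) (x : ℝ) : ℝ :=
  ((p + 1) * ω / 2 *
      (1 / Real.cosh ((p - 1) * Real.sqrt ω / 2 * |x| + artanh (γ / (2 * Real.sqrt ω)))) ^ 2)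
    ^ (1 / (p - 1))

/-- `φ_ω` as a complex valued function. -/
def phiC (γ p ω : ℝ) : ℝ → ℂ := fun x => (phi γ p ω x : ℂ)

/-- The `L²`-invariant scaling `v^λ(x) = λ^{1/2} v(λ x)`. -/
def scale (l : ℝ) (v : ℝ → ℂ) : ℝ → ℂ := fun x => (Real.sqrt l : ℂ) * v (l * x)

/-- The set `𝓑_ω`. -/
def inB (γ p ω : ℝ) (v : ℝ → ℂ) : Prop :=
  MemH1 v ∧ 0 < En γ p v ∧ En γ p v < En γ p (phiC γ p ω) ∧
    l2Sq v = l2Sq (phiC γ p ω) ∧ Pfun γ p v < 0 ∧ Kfun γ p ω v < 0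


lemma key_poly {β a b L t u : ℝ} (hβ : 1 ≤ β) (ht0 : 0 ≤ t) (ha : 0 ≤ a) (hL : 0 ≤ L)
    (hu : 1 + β*(t-1) ≤ u)
    (h2 : 2*(β+2)*a ≤ (β+2)*b + (β+1)*L)
    (h3 : (β+2)*b + L ≤ (β+2)*a) :
    (β+2)*(a*t^2 + a - b*t) - L*u*t ≤ β*L := by
  have f1 : (2*(β+2)*a - (β+1)*L)*t ≤ ((β+2)*b)*t :=
    mul_le_mul_of_nonneg_right (by linarith) ht0
  have f2 : L*t*(1+β*(t-1)) ≤ L*u*t := by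
    have := mul_le_mul_of_nonneg_left hu (mul_nonneg hL ht0)
    nlinarith [this]
  have f3 : (β+2)*a ≤ β*L := by linarith
  have f4 : (β+2)*a*(1-t)^2 ≤ β*L*(1-t)^2 :=
    mul_le_mul_of_nonneg_right f3 (sq_nonneg _)
  nlinarith [f1, f2, f4]

lemma key_ineq {p a b L t : ℝ} (hp : 5 < p) (ht0 : 0 < t) (ht1 : t ≤ 1) (ha : 0 ≤ a) (hL : 0 ≤ L)
    (h2 : a - b/2 - (p-1)/(2*(p+1))*L < 0)
    (h3 : 0 < a/2 - b/2 - L/(p+1)) :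
    a/2*t^2 - b/2*t - L/(p+1)*t^((p-1)/2) ≤ -a/2 + (p-3)/(2*(p+1))*L := by
  set β : ℝ := (p-3)/2 with hβdef
  have hβ : 1 ≤ β := by rw [hβdef]; linarith
  have hu : 1 + β*(t-1) ≤ t ^ β :=  by
    have := one_add_mul_self_le_rpow_one_add (by linarith : (-1:ℝ) ≤ t - 1) hβ
    simpa using this
  have hsplit : t ^ ((p-1)/2) = t ^ β * t := by
    rw [show (p-1)/2 = β + 1 by rw [hβdef]; ring, Real.rpow_add_one ht0.ne']
  have hp1 : (0:ℝ) < p + 1 := by linarith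
  have hβ2 : β + 2 = (p+1)/2 := by rw [hβdef]; ring
  have hp1' : (p:ℝ) + 1 ≠ 0 := ne_of_gt hp1
  have h2' : 2*(β+2)*a ≤ (β+2)*b + (β+1)*L := by
    rw [hβ2]
    have h := h2
    field_simp at h
    nlinarith [h]
  have h3' : (β+2)*b + L ≤ (β+2)*a := by
    rw [hβ2]
    have h := h3
    field_simp at h
    nlinarith [h]
  have := key_poly hβ ht0.le ha hL hu h2' h3'
  rw [hsplit]
  have hq : (β+2)*(a*t^2 + a - b*t) - L*(t^β)*t ≤ β*L := this
  have : a/2*t^2 - b/2*t - L/(p+1)*(t^β*t) - (-a/2 + (p-3)/(2*(p+1))*L)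
      = (1/(p+1)) * ((β+2)*(a*t^2 + a - b*t) - L*(t^β)*t - β*L) := by
    rw [hβdef]; field_simp; ring
  nlinarith [mul_le_mul_of_nonneg_left (sub_nonpos.mpr hq) (le_of_lt (by positivity : (0:ℝ) < 1/(p+1)))]
section T2
variable {v : ℝ → ℂ} {l : ℝ}

lemma scale_eq (l : ℝ) (v : ℝ → ℂ) :
    scale l v = fun x => (Real.sqrt l : ℂ) * v (l * x) := rfl

lemma sqrtC_ne_zero (hl : 0 < l) : (Real.sqrt l : ℂ) ≠ 0 := by
  simp [Complex.ofReal_eq_zero, Real.sqrt_eq_zero', not_le, hl]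

lemma diffAt_scale (hl : 0 < l) (x : ℝ) (h : DifferentiableAt ℝ v (l * x)) :
    DifferentiableAt ℝ (scale l v) x := by
  rw [scale_eq]
  exact (h.comp x ((differentiable_id.const_mul l) x)).const_mul _

lemma diffAt_of_scale (hl : 0 < l) (x : ℝ) (h : DifferentiableAt ℝ (scale l v) x) :
    DifferentiableAt ℝ v (l * x) := by
  have hst : Real.sqrt l ≠ 0 := by
    simp [Real.sqrt_eq_zero', not_le, hl]
  have hv : v = fun y => ((Real.sqrt l : ℂ))⁻¹ * scale l v (l⁻¹ * y) := by
    funext y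
    rw [scale_eq]
    simp only [mul_inv_cancel_left₀ (ne_of_gt hl)]
    rw [inv_mul_cancel_left₀ (sqrtC_ne_zero hl)]
  rw [hv]
  have h2 : DifferentiableAt ℝ (fun y => scale l v (l⁻¹ * y)) (l * x) := by
    have : DifferentiableAt ℝ (scale l v) (l⁻¹ * (l * x)) := by
      rwa [inv_mul_cancel_left₀ (ne_of_gt hl)]
    exact this.comp (l * x) ((differentiable_id.const_mul l⁻¹) (l*x))
  exact h2.const_mul _

lemma deriv_scale (hl : 0 < l) (v : ℝ → ℂ) (x : ℝ) :
    deriv (scale l v) x = ((Real.sqrt l * l : ℝ) : ℂ) * deriv v (l * x) := by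
  by_cases h : DifferentiableAt ℝ v (l * x)
  · have h1 : HasDerivAt (fun y : ℝ => l * y) l x := by
      simpa using (hasDerivAt_id x).const_mul l
    have h2 : HasDerivAt v (deriv v (l * x)) (l * x) := h.hasDerivAt
    have h3 : HasDerivAt (fun y => v (l * y)) (l • deriv v (l * x)) x :=
      h2.scomp x h1
    have h4 : HasDerivAt (scale l v)
        ((Real.sqrt l : ℂ) * (l • deriv v (l * x))) x := h3.const_mul _
    rw [h4.deriv]
    push_cast [Complex.real_smul]
    ring
  · rw [deriv_zero_of_not_differentiableAt h,
      deriv_zero_of_not_differentiableAt (fun hc => h (diffAt_of_scale hl x hc))]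
    simp

end T2
section T3
variable {v : ℝ → ℂ} {l : ℝ}

lemma norm_sqrtC (hl : 0 ≤ l) : ‖(Real.sqrt l : ℂ)‖ = Real.sqrt l := by
  rw [Complex.norm_real, Real.norm_eq_abs, abs_of_nonneg (Real.sqrt_nonneg l)]

lemma scale_zero_eval (hl : 0 ≤ l) (v : ℝ → ℂ) :
    ‖scale l v 0‖ ^ 2 = l * ‖v 0‖ ^ 2 := by
  rw [scale_eq]
  simp only [mul_zero, norm_mul, norm_sqrtC hl, mul_pow, Real.sq_sqrt hl]

lemma l2Sq_scale (hl : 0 < l) (v : ℝ → ℂ) : l2Sq (scale l v) = l2Sq v := by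
  unfold l2Sq
  rw [scale_eq]
  simp only [norm_mul, norm_sqrtC hl.le, mul_pow, Real.sq_sqrt hl.le]
  rw [MeasureTheory.integral_const_mul]
  rw [MeasureTheory.Measure.integral_comp_mul_left (fun y => ‖v y‖ ^ 2) l]
  rw [abs_of_pos (inv_pos.mpr hl), smul_eq_mul]
  field_simp

lemma gradSq_scale (hl : 0 < l) (v : ℝ → ℂ) : gradSq (scale l v) = l^2 * gradSq v := by
  unfold gradSq
  have : (fun x => ‖deriv (scale l v) x‖ ^ 2)
      = fun x => (Real.sqrt l * l)^2 * ‖deriv v (l * x)‖ ^ 2 := by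
    funext x
    rw [deriv_scale hl v x, norm_mul, Complex.norm_real, Real.norm_eq_abs,
      abs_of_pos (by positivity), mul_pow]
  rw [this, MeasureTheory.integral_const_mul,
    MeasureTheory.Measure.integral_comp_mul_left (fun y => ‖deriv v y‖ ^ 2) l,
    abs_of_pos (inv_pos.mpr hl), smul_eq_mul, mul_pow, Real.sq_sqrt hl.le]
  field_simp

lemma lpPow_scale (hl : 0 < l) (hp : 0 < p) (v : ℝ → ℂ) :
    lpPow p (scale l v) = l ^ ((p-1)/2) * lpPow p v := by
  unfold lpPow
  rw [scale_eq]
  have h1 : ∀ x : ℝ, ‖(Real.sqrt l : ℂ) * v (l * x)‖ ^ (p+1)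
      = l ^ ((p+1)/2) * ‖v (l * x)‖ ^ (p+1) := by
    intro x
    rw [norm_mul, norm_sqrtC hl.le,
      Real.mul_rpow (Real.sqrt_nonneg l) (norm_nonneg _),
      Real.sqrt_eq_rpow, ← Real.rpow_mul hl.le]
    congr 2
    ring
  simp only [h1]
  rw [MeasureTheory.integral_const_mul,
    MeasureTheory.Measure.integral_comp_mul_left (fun y => ‖v y‖ ^ (p+1)) l,
    abs_of_pos (inv_pos.mpr hl), smul_eq_mul, ← mul_assoc]
  congr 1
  rw [← Real.rpow_neg_one l, ← Real.rpow_add hl]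
  congr 1
  ring
section T4
open MeasureTheory
variable {v : ℝ → ℂ} {l : ℝ}

lemma memLp_comp_mul_left (hl : 0 < l) {u : ℝ → ℂ}
    (hu : MemLp u 2 volume)
    (hsm : AEStronglyMeasurable (fun x => u (l * x)) volume) :
    MemLp (fun x => u (l * x)) 2 volume := by
  refine ⟨hsm, ?_⟩
  have hemb : MeasurableEmbedding (fun x : ℝ => l * x) :=
    (Homeomorph.mulLeft₀ l (ne_of_gt hl)).measurableEmbedding
  have h1 : eLpNorm (fun x => u (l * x)) 2 volume
      = eLpNorm u 2 (Measure.map (fun x : ℝ => l * x) volume) :=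
    (hemb.eLpNorm_map_measure).symm
  rw [h1, Real.map_volume_mul_left (ne_of_gt hl),
    eLpNorm_smul_measure_of_ne_zero (by simp [ne_of_gt hl] : ENNReal.ofReal |l⁻¹| ≠ 0)]
  rw [smul_eq_mul]
  exact ENNReal.mul_lt_top (ENNReal.rpow_lt_top_of_nonneg (by norm_num) ENNReal.ofReal_ne_top) hu.2

lemma continuous_scale (hl : 0 < l) (hc : Continuous v) : Continuous (scale l v) := by
  rw [scale_eq]
  exact continuous_const.mul (hc.comp (continuous_const.mul continuous_id))

lemma memH1_scale (hl : 0 < l) (hv : MemH1 v) : MemH1 (scale l v) := by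
  obtain ⟨hc, hl2, hd2, hftc⟩ := hv
  have hcs : Continuous (scale l v) := continuous_scale hl hc
  refine ⟨hcs, ?_, ?_, ?_⟩
  · rw [scale_eq]
    exact (memLp_comp_mul_left hl hl2
      ((hc.comp (continuous_const.mul continuous_id)).aestronglyMeasurable)).const_mul _
  · have hde : deriv (scale l v)
        = fun x => ((Real.sqrt l * l : ℝ) : ℂ) * deriv v (l * x) := funext (deriv_scale hl v)
    rw [hde]
    exact (memLp_comp_mul_left hl hd2
      ((measurable_deriv v).comp (measurable_const_mul l)).aestronglyMeasurable).const_mul _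
  · intro x
    have h1 : ∫ t in (0:ℝ)..x, deriv (scale l v) t
        = ∫ t in (0:ℝ)..x, ((Real.sqrt l * l : ℝ) : ℂ) * deriv v (l * t) := by
      congr 1
      exact funext (deriv_scale hl v)
    rw [h1, intervalIntegral.integral_const_mul]
    rw [intervalIntegral.integral_comp_mul_left (fun y => deriv v y) (ne_of_gt hl)]
    have h2 := hftc (l * x)
    rw [scale_eq]
    simp only [mul_zero]
    rw [h2]
    have : (Real.sqrt l : ℂ) * (v 0 + ∫ t in (0:ℝ)..(l*x), deriv v t)
        = (Real.sqrt l : ℂ) * v 0 + (Real.sqrt l : ℂ) * ∫ t in (0:ℝ)..(l*x), deriv v t := by ring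
    rw [this]
    congr 1
    rw [Complex.real_smul]
    push_cast
    rw [← mul_assoc, mul_assoc (Real.sqrt l : ℂ)]
    rw [mul_inv_cancel₀ (by exact_mod_cast (ne_of_gt hl) : (l:ℂ) ≠ 0), mul_one]
section T5
open MeasureTheory
variable {v : ℝ → ℂ} {γ p ω : ℝ}

lemma l2Sq_nonneg (v : ℝ → ℂ) : 0 ≤ l2Sq v :=
  integral_nonneg fun x => by positivity

lemma gradSq_nonneg (v : ℝ → ℂ) : 0 ≤ gradSq v :=
  integral_nonneg fun x => by positivity

lemma lpPow_nonneg (p : ℝ) (v : ℝ → ℂ) : 0 ≤ lpPow p v :=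
  integral_nonneg fun x => by positivity

lemma En_zero (γ : ℝ) (hp1 : p + 1 ≠ 0) : En γ p (0 : ℝ → ℂ) = 0 := by
  have h0 : deriv (0 : ℝ → ℂ) = fun _ => 0 := by
    funext x
    exact deriv_const x 0
  unfold En gradSq lpPow
  simp [h0, Real.zero_rpow hp1]

lemma l2Sq_pos (hp1 : p + 1 ≠ 0) (hv : MemH1 v) (hE : 0 < En γ p v) : 0 < l2Sq v := by
  rcases (l2Sq_nonneg v).lt_or_eq with h | h
  · exact h
  · exfalso
    have hint : Integrable (fun x => ‖v x‖ ^ 2) volume := by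
      have h2 := hv.2.1.integrable_norm_rpow (by norm_num) (by norm_num)
      have : (fun x => ‖v x‖ ^ ((2:ℝ≥0∞).toReal)) = fun x => ‖v x‖ ^ 2 := by
        funext x
        rw [ENNReal.toReal_ofNat]
        rw [show ((2:ℝ)) = ((2:ℕ):ℝ) by norm_num, Real.rpow_natCast]
      rwa [this] at h2
    have hae := (integral_eq_zero_iff_of_nonneg (fun x => by positivity) hint).1 h.symm
    have hv0 : v =ᵐ[volume] 0 := by
      filter_upwards [hae] with x hx
      have : ‖v x‖ ^ 2 = 0 := hx
      simpa [pow_eq_zero_iff] using this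
    have hveq : v = 0 := (hv.1.ae_eq_iff_eq volume continuous_const).1 hv0
    rw [hveq, En_zero γ hp1] at hE
    exact lt_irrefl 0 hE
end T5
section Main
open MeasureTheory

theorem stmt11' (γ p ω : ℝ) (hγ : 0 < γ) (hp : 5 < p) (hω : γ ^ 2 / 4 < ω)
    (hEφ : 0 < En γ p (phiC γ p ω)) (hd : Sfun γ p ω (phiC γ p ω) = dInf γ p ω)
    (v : ℝ → ℂ) (hv : inB γ p ω v) :
    En γ p (phiC γ p ω) ≤ En γ p v - Pfun γ p v := by
  obtain ⟨hH1, hE0, hElt, hmass, hP, hK⟩ := hv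
  have hω0 : 0 < ω := lt_of_le_of_lt (by positivity) hω
  have hp1 : (0:ℝ) < p + 1 := by linarith
  have hα0 : (0:ℝ) < (p-1)/2 := by linarith
  have haN : 0 ≤ gradSq v := gradSq_nonneg v
  have hLN : 0 ≤ lpPow p v := lpPow_nonneg p v
  have hq : 0 < l2Sq v := l2Sq_pos (ne_of_gt hp1) hH1 hE0
  -- IVT to find t ∈ (0,1) with K(vᵗ) = 0
  set F : ℝ → ℝ := fun s =>
    gradSq v * s^2 + ω * l2Sq v - γ * ‖v 0‖^2 * s - lpPow p v * s^((p-1)/2) with hF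
  have hrc : Continuous fun s : ℝ => s ^ ((p-1)/2) :=
    continuous_iff_continuousAt.2 fun x => Real.continuousAt_rpow_const x _ (Or.inr hα0.le)
  have hFc : ContinuousOn F (Set.Icc 0 1) := by
    apply Continuous.continuousOn
    exact (((continuous_const.mul (continuous_pow 2)).add continuous_const).sub
        (continuous_const.mul continuous_id)).sub (continuous_const.mul hrc)
  have hmem0 : (0:ℝ) ∈ Set.Ioo (F 1) (F 0) := by
    constructor
    · have : F 1 = Kfun γ p ω v := by
        simp only [hF, one_pow, Real.one_rpow, mul_one]
        unfold Kfun
        ring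
      rw [this]; exact hK
    · have : F 0 = ω * l2Sq v := by
        simp [hF, Real.zero_rpow (ne_of_gt hα0)]
      rw [this]; positivity
  obtain ⟨t, htIoo, htF⟩ := intermediate_value_Ioo' (by norm_num : (0:ℝ) ≤ 1) hFc hmem0
  have ht0 : 0 < t := htIoo.1
  have ht1 : t < 1 := htIoo.2
  -- the scaled function is an admissible competitor
  have hp0 : (0:ℝ) < p := by linarith
  have hKs : Kfun γ p ω (scale t v) = 0 := by
    unfold Kfun
    rw [gradSq_scale ht0, l2Sq_scale ht0, lpPow_scale ht0 hp0, scale_zero_eval ht0.le]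
    have h := htF
    simp only [hF] at h
    nlinarith [h]
  have hvne : v ≠ 0 := by
    intro h
    rw [h, En_zero γ (ne_of_gt hp1)] at hE0
    exact lt_irrefl 0 hE0
  have hsne : scale t v ≠ 0 := by
    intro h
    apply hvne
    funext y
    have h1 := congrFun h (t⁻¹ * y)
    rw [scale_eq] at h1
    simp only [Pi.zero_apply] at h1
    rcases mul_eq_zero.1 h1 with h2 | h2
    · exact absurd h2 (sqrtC_ne_zero ht0)
    · rwa [mul_inv_cancel_left₀ (ne_of_gt ht0)] at h2
  have hmem : Sfun γ p ω (scale t v) ∈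
      {s : ℝ | ∃ u : ℝ → ℂ, MemH1 u ∧ u ≠ 0 ∧ Kfun γ p ω u = 0 ∧ s = Sfun γ p ω u} :=
    ⟨scale t v, memH1_scale ht0 hH1, hsne, hKs, rfl⟩
  have hSφ : Sfun γ p ω (phiC γ p ω) = En γ p (phiC γ p ω) + ω/2 * l2Sq v := by
    unfold Sfun; rw [← hmass]
  have hSφpos : 0 < Sfun γ p ω (phiC γ p ω) := by
    rw [hSφ]; positivity
  have hbdd : BddBelow
      {s : ℝ | ∃ u : ℝ → ℂ, MemH1 u ∧ u ≠ 0 ∧ Kfun γ p ω u = 0 ∧ s = Sfun γ p ω u} := by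
    by_contra hb
    have : dInf γ p ω = 0 := Real.sInf_of_not_bddBelow hb
    rw [hd, this] at hSφpos
    exact lt_irrefl 0 hSφpos
  have hle : dInf γ p ω ≤ Sfun γ p ω (scale t v) := csInf_le hbdd hmem
  have hSs : Sfun γ p ω (scale t v)
      = (gradSq v/2 * t^2 - γ * ‖v 0‖^2/2 * t - lpPow p v/(p+1) * t^((p-1)/2))
        + ω/2 * l2Sq v := by
    unfold Sfun En
    rw [gradSq_scale ht0, l2Sq_scale ht0, lpPow_scale ht0 hp0, scale_zero_eval ht0.le]
    ring
  have hEφle : En γ p (phiC γ p ω)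
      ≤ gradSq v/2 * t^2 - γ * ‖v 0‖^2/2 * t - lpPow p v/(p+1) * t^((p-1)/2) := by
    have h := hle
    rw [← hd, hSφ, hSs] at h
    linarith
  have hkey := key_ineq (b := γ * ‖v 0‖^2) hp ht0 ht1.le haN hLN
    (by unfold Pfun at hP; linarith [hP])
    (by unfold En at hE0; linarith [hE0])
  have hfin : En γ p v - Pfun γ p v
      = -(gradSq v)/2 + (p-3)/(2*(p+1)) * lpPow p v := by
    unfold En Pfun
    have h1 : p + 1 ≠ 0 := ne_of_gt hp1
    field_simp
    ring
  rw [hfin]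
  calc En γ p (phiC γ p ω)
      ≤ gradSq v/2 * t^2 - γ * ‖v 0‖^2/2 * t - lpPow p v/(p+1) * t^((p-1)/2) := hEφle
    _ ≤ -(gradSq v)/2 + (p-3)/(2*(p+1)) * lpPow p v := by linarith [hkey]
end Main

/-- `E(φ_ω) ≤ E(v) - P(v)` for every `v ∈ 𝓑_ω`. -/
theorem stmt11 (γ p ω : ℝ) (hγ : 0 < γ) (hp : 5 < p) (hω : γ ^ 2 / 4 < ω)
    (hEφ : 0 < En γ p (phiC γ p ω)) (hd : Sfun γ p ω (phiC γ p ω) = dInf γ p ω)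
    (v : ℝ → ℂ) (hv : inB γ p ω v) :
    En γ p (phiC γ p ω) ≤ En γ p v - Pfun γ p v := by
  exact stmt11' γ p ω hγ hp hω hEφ hd v hv
end T4
end T3
end
end

section
/- Let γ > 0, p > 1 and ω > γ²/4. Then the explicit function φ_ω satisfies the Nehari identity K_ω(φ_ω) = 0 and the Pohozaev-type identity P(φ_ω) = 0. -/
open MeasureTheory Set
open scoped ENNReal

noncomputable section

namespace Stmt13Aux

open Real Filter

/-- The argument of the hyperbolic functions. -/
def uu (γ p ω x : ℝ) : ℝ :=
  (p - 1) * Real.sqrt ω / 2 * x + _root_.artanh (γ / (2 * Real.sqrt ω))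

/-- The smooth profile on the half line. -/
def psi (γ p ω x : ℝ) : ℝ :=
  ((p + 1) * ω / 2) ^ (1 / (p - 1)) * Real.cosh (uu γ p ω x) ^ (-(2 / (p - 1)))

/-- The derivative of `psi`. -/
def Dpsi (γ p ω x : ℝ) : ℝ :=
  -Real.sqrt ω * (Real.sinh (uu γ p ω x) / Real.cosh (uu γ p ω x) * psi γ p ω x)

variable {γ p ω : ℝ}

lemma base_pos (hp : 1 < p) (hω : 0 < ω) : 0 < (p + 1) * ω / 2 := by nlinarith

lemma psi_pos (hp : 1 < p) (hω : 0 < ω) (x : ℝ) : 0 < psi γ p ω x :=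
  mul_pos (Real.rpow_pos_of_pos (base_pos hp hω) _)
    (Real.rpow_pos_of_pos (Real.cosh_pos _) _)

lemma phi_eq (hp : 1 < p) (hω : 0 < ω) (x : ℝ) : phi γ p ω x = psi γ p ω |x| := by
  have hc := Real.cosh_pos (uu γ p ω |x|)
  have h1 : (1 / Real.cosh (uu γ p ω |x|)) ^ (2 : ℕ)
      = Real.cosh (uu γ p ω |x|) ^ ((-2 : ℝ)) := by
    rw [one_div, ← Real.rpow_natCast (Real.cosh (uu γ p ω |x|))⁻¹ 2,
      Real.inv_rpow hc.le, ← Real.rpow_neg hc.le]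
    norm_num
  show ((p + 1) * ω / 2 * (1 / Real.cosh (uu γ p ω |x|)) ^ (2:ℕ)) ^ (1 / (p - 1)) = _
  rw [h1, Real.mul_rpow (base_pos hp hω).le (Real.rpow_nonneg hc.le _),
    ← Real.rpow_mul hc.le]
  unfold psi
  norm_num
  left; ring

lemma hasDerivAt_uu (x : ℝ) :
    HasDerivAt (uu γ p ω) ((p - 1) * Real.sqrt ω / 2) x := by
  unfold uu; simpa using
    (((hasDerivAt_id x).const_mul ((p - 1) * Real.sqrt ω / 2)).add_const
      (_root_.artanh (γ / (2 * Real.sqrt ω))))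

lemma hasDerivAt_psi (hp : 1 < p) (hω : 0 < ω) (x : ℝ) :
    HasDerivAt (psi γ p ω) (Dpsi γ p ω x) x := by
  have hc := Real.cosh_pos (uu γ p ω x)
  have hp1 : p - 1 ≠ 0 := by intro h; nlinarith
  have hr := ((hasDerivAt_uu (γ := γ) (p := p) (ω := ω) x).cosh).rpow_const
    (p := -(2 / (p - 1))) (Or.inl hc.ne')
  have h := hr.const_mul (((p + 1) * ω / 2) ^ (1 / (p - 1)))
  refine h.congr_deriv (Eq.symm ?_)
  rw [Real.rpow_sub_one hc.ne']
  unfold Dpsi psi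
  field_simp

lemma psi_rpow (hp : 1 < p) (hω : 0 < ω) (x : ℝ) :
    psi γ p ω x ^ (p + 1)
      = (p + 1) * ω / 2 * psi γ p ω x ^ 2 / Real.cosh (uu γ p ω x) ^ 2 := by
  have hc := Real.cosh_pos (uu γ p ω x)
  have hp1 : p - 1 ≠ 0 := by intro h; nlinarith
  have hpos := psi_pos (γ := γ) hp hω x
  have h1 : psi γ p ω x ^ (p + 1) = psi γ p ω x ^ (2 : ℝ) * psi γ p ω x ^ (p - 1) := by
    rw [← Real.rpow_add hpos]; congr 1; ring
  have h2 : psi γ p ω x ^ (p - 1)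
      = (p + 1) * ω / 2 * (Real.cosh (uu γ p ω x) ^ (2:ℕ))⁻¹ := by
    have e1 : 1 / (p - 1) * (p - 1) = 1 := by field_simp
    have e2 : -(2 / (p - 1)) * (p - 1) = -2 := by field_simp
    unfold psi
    rw [Real.mul_rpow (Real.rpow_nonneg (base_pos hp hω).le _)
      (Real.rpow_nonneg hc.le _),
      ← Real.rpow_mul (base_pos hp hω).le, ← Real.rpow_mul hc.le, e1, e2,
      Real.rpow_one, show (-2:ℝ) = -((2:ℕ):ℝ) by norm_num, Real.rpow_neg hc.le,
      Real.rpow_natCast]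
  rw [h1, h2, show (2:ℝ) = ((2:ℕ):ℝ) by norm_num, Real.rpow_natCast]
  field_simp

lemma Dpsi_sq (hp : 1 < p) (hω : 0 < ω) (x : ℝ) :
    Dpsi γ p ω x ^ 2
      = ω * psi γ p ω x ^ 2 - 2 / (p + 1) * psi γ p ω x ^ (p + 1) := by
  have hc := Real.cosh_pos (uu γ p ω x)
  have hs : Real.sinh (uu γ p ω x) ^ 2 = Real.cosh (uu γ p ω x) ^ 2 - 1 :=
    Real.sinh_sq _
  have hsw : Real.sqrt ω ^ 2 = ω := Real.sq_sqrt hω.le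
  have hp1 : (p : ℝ) + 1 ≠ 0 := by nlinarith
  rw [psi_rpow hp hω]
  unfold Dpsi
  field_simp
  rw [hsw, hs]
  ring

lemma hasDerivAt_Dpsi (hp : 1 < p) (hω : 0 < ω) (x : ℝ) :
    HasDerivAt (Dpsi γ p ω)
      (ω * psi γ p ω x - (p + 1) * ω / 2 * psi γ p ω x / Real.cosh (uu γ p ω x) ^ 2)
      x := by
  have hc := Real.cosh_pos (uu γ p ω x)
  have hu := hasDerivAt_uu (γ := γ) (p := p) (ω := ω) x
  have hdiv := (hu.sinh).div (hu.cosh) hc.ne'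
  have h := (hdiv.mul (hasDerivAt_psi (γ := γ) hp hω x)).const_mul (-Real.sqrt ω)
  refine h.congr_deriv (Eq.symm ?_)
  unfold Dpsi
  have hs : Real.sinh (uu γ p ω x) ^ 2 = Real.cosh (uu γ p ω x) ^ 2 - 1 :=
    Real.sinh_sq _
  have hsw : Real.sqrt ω ^ 2 = ω := Real.sq_sqrt hω.le
  simp only [Pi.div_apply]
  field_simp
  rw [hsw, hs]
  ring

lemma hasDerivAt_h (hp : 1 < p) (hω : 0 < ω) (x : ℝ) :
    HasDerivAt (fun y => psi γ p ω y * Dpsi γ p ω y)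
      (Dpsi γ p ω x ^ 2 + ω * psi γ p ω x ^ 2 - psi γ p ω x ^ (p + 1)) x := by
  have h := (hasDerivAt_psi (γ := γ) hp hω x).mul (hasDerivAt_Dpsi (γ := γ) hp hω x)
  refine h.congr_deriv (Eq.symm ?_)
  rw [psi_rpow hp hω]
  ring


/-- The decay constant. -/
def Mc (γ p ω : ℝ) : ℝ :=
  ((p + 1) * ω / 2) ^ (1 / (p - 1)) * (2 : ℝ) ^ (2 / (p - 1)) *
    Real.exp (-(2 / (p - 1)) * _root_.artanh (γ / (2 * Real.sqrt ω)))

lemma Mc_pos (hp : 1 < p) (hω : 0 < ω) : 0 < Mc γ p ω :=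
  mul_pos (mul_pos (Real.rpow_pos_of_pos (base_pos hp hω) _)
    (Real.rpow_pos_of_pos two_pos _)) (Real.exp_pos _)

lemma psi_le (hp : 1 < p) (hω : 0 < ω) (x : ℝ) :
    psi γ p ω x ≤ Mc γ p ω * Real.exp (-Real.sqrt ω * x) := by
  have hp1 : p - 1 ≠ 0 := by intro h; nlinarith
  have he := Real.exp_pos (uu γ p ω x)
  have h1 : Real.exp (uu γ p ω x) / 2 ≤ Real.cosh (uu γ p ω x) := by
    rw [Real.cosh_eq]
    nlinarith [Real.exp_pos (-(uu γ p ω x))]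
  have h2 : Real.cosh (uu γ p ω x) ^ (-(2 / (p - 1)))
      ≤ (Real.exp (uu γ p ω x) / 2) ^ (-(2 / (p - 1))) := by
    apply Real.rpow_le_rpow_of_nonpos (by positivity) h1
    rw [neg_nonpos]
    have : 0 < p - 1 := by linarith
    positivity
  have h3 : psi γ p ω x
      ≤ ((p + 1) * ω / 2) ^ (1 / (p - 1)) * (Real.exp (uu γ p ω x) / 2) ^ (-(2 / (p - 1))) :=
    mul_le_mul_of_nonneg_left h2 (Real.rpow_nonneg (base_pos hp hω).le _)
  refine h3.trans (le_of_eq ?_)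
  have h5 : (Real.exp (uu γ p ω x) / 2) ^ (-(2 / (p - 1)))
      = (2:ℝ) ^ (2 / (p - 1)) *
        (Real.exp (-(2 / (p - 1)) * _root_.artanh (γ / (2 * Real.sqrt ω))) *
          Real.exp (-Real.sqrt ω * x)) := by
    rw [Real.div_rpow he.le (by norm_num : (0:ℝ) ≤ 2), ← Real.exp_mul,
      Real.rpow_neg (by norm_num : (0:ℝ) ≤ 2), div_inv_eq_mul, ← Real.exp_add]
    rw [show uu γ p ω x * -(2 / (p - 1))
        = -(2 / (p - 1)) * _root_.artanh (γ / (2 * Real.sqrt ω)) + -Real.sqrt ω * x by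
      unfold uu; field_simp; ring]
    ring
  rw [h5]
  unfold Mc
  ring

lemma abs_Dpsi_le (hp : 1 < p) (hω : 0 < ω) (x : ℝ) :
    |Dpsi γ p ω x| ≤ Real.sqrt ω * psi γ p ω x := by
  have hc := Real.cosh_pos (uu γ p ω x)
  have hψ := psi_pos (γ := γ) hp hω x
  have h1 : |Real.sinh (uu γ p ω x) / Real.cosh (uu γ p ω x)| ≤ 1 := by
    rw [abs_div, abs_of_pos hc, div_le_one hc, ← Real.cosh_abs, Real.abs_sinh]
    exact (Real.sinh_lt_cosh _).le
  unfold Dpsi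
  rw [abs_mul, abs_neg, abs_of_nonneg (Real.sqrt_nonneg ω), abs_mul, abs_of_pos hψ]
  have := mul_le_mul_of_nonneg_right h1 hψ.le
  nlinarith [Real.sqrt_nonneg ω]

lemma cont_psi (hp : 1 < p) (hω : 0 < ω) : Continuous (psi γ p ω) :=
  continuous_iff_continuousAt.2 fun x => (hasDerivAt_psi (γ := γ) hp hω x).continuousAt

lemma cont_Dpsi (hp : 1 < p) (hω : 0 < ω) : Continuous (Dpsi γ p ω) :=
  continuous_iff_continuousAt.2 fun x => (hasDerivAt_Dpsi (γ := γ) hp hω x).continuousAt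

lemma integrable_of_exp_bound {f : ℝ → ℝ} (hf : Continuous f) {M c : ℝ} (hc : 0 < c)
    (h : ∀ x, |f x| ≤ M * Real.exp (-c * x)) : IntegrableOn f (Set.Ioi 0) := by
  refine Integrable.mono' ((exp_neg_integrableOn_Ioi 0 hc).const_mul M)
    hf.aestronglyMeasurable.restrict (MeasureTheory.ae_of_all _ fun x => ?_)
  simpa [Real.norm_eq_abs] using h x

lemma exp_sq_aux (c t : ℝ) : (c * Real.exp t) ^ 2 = c ^ 2 * Real.exp (2 * t) := by
  rw [mul_pow, pow_two (Real.exp t), ← Real.exp_add]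
  ring_nf

lemma int_psi_sq (hp : 1 < p) (hω : 0 < ω) :
    IntegrableOn (fun x => psi γ p ω x ^ 2) (Set.Ioi 0) := by
  have hsw : 0 < Real.sqrt ω := Real.sqrt_pos.2 hω
  refine integrable_of_exp_bound ((cont_psi hp hω).pow 2) (M := Mc γ p ω ^ 2)
    (c := 2 * Real.sqrt ω) (by positivity) fun x => ?_
  rw [abs_of_nonneg (sq_nonneg _)]
  calc psi γ p ω x ^ 2 ≤ (Mc γ p ω * Real.exp (-Real.sqrt ω * x)) ^ 2 :=
        pow_le_pow_left₀ (psi_pos hp hω x).le (psi_le hp hω x) 2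
    _ = Mc γ p ω ^ 2 * Real.exp (-(2 * Real.sqrt ω) * x) := by
        rw [exp_sq_aux]; congr 1; ring

lemma int_Dpsi_sq (hp : 1 < p) (hω : 0 < ω) :
    IntegrableOn (fun x => Dpsi γ p ω x ^ 2) (Set.Ioi 0) := by
  have hsw : 0 < Real.sqrt ω := Real.sqrt_pos.2 hω
  refine integrable_of_exp_bound ((cont_Dpsi hp hω).pow 2)
    (M := (Real.sqrt ω * Mc γ p ω) ^ 2) (c := 2 * Real.sqrt ω) (by positivity) fun x => ?_
  rw [abs_of_nonneg (sq_nonneg _), ← sq_abs]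
  calc |Dpsi γ p ω x| ^ 2 ≤ (Real.sqrt ω * (Mc γ p ω * Real.exp (-Real.sqrt ω * x))) ^ 2 := by
        refine pow_le_pow_left₀ (abs_nonneg _) ((abs_Dpsi_le hp hω x).trans ?_) 2
        exact mul_le_mul_of_nonneg_left (psi_le hp hω x) (Real.sqrt_nonneg ω)
    _ = (Real.sqrt ω * Mc γ p ω) ^ 2 * Real.exp (-(2 * Real.sqrt ω) * x) := by
        rw [← mul_assoc, exp_sq_aux]; congr 1; ring

lemma int_psi_rpow (hp : 1 < p) (hω : 0 < ω) :
    IntegrableOn (fun x => psi γ p ω x ^ (p + 1)) (Set.Ioi 0) := by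
  have hsw : 0 < Real.sqrt ω := Real.sqrt_pos.2 hω
  have hMc := Mc_pos (γ := γ) hp hω
  refine integrable_of_exp_bound
    ((cont_psi hp hω).rpow_const fun x => Or.inl (psi_pos hp hω x).ne')
    (M := Mc γ p ω ^ (p + 1)) (c := (p + 1) * Real.sqrt ω) (by positivity) fun x => ?_
  rw [abs_of_nonneg (Real.rpow_nonneg (psi_pos hp hω x).le _)]
  calc psi γ p ω x ^ (p + 1) ≤ (Mc γ p ω * Real.exp (-Real.sqrt ω * x)) ^ (p + 1) :=
        Real.rpow_le_rpow (psi_pos hp hω x).le (psi_le hp hω x) (by linarith)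
    _ = Mc γ p ω ^ (p + 1) * Real.exp (-((p + 1) * Real.sqrt ω) * x) := by
        rw [Real.mul_rpow hMc.le (Real.exp_pos _).le, ← Real.exp_mul]
        congr 2; ring

lemma tendsto_h (hp : 1 < p) (hω : 0 < ω) :
    Filter.Tendsto (fun x => psi γ p ω x * Dpsi γ p ω x) atTop (nhds 0) := by
  have hsw : 0 < Real.sqrt ω := Real.sqrt_pos.2 hω
  have hb : ∀ x : ℝ, ‖psi γ p ω x * Dpsi γ p ω x‖
      ≤ Real.sqrt ω * Mc γ p ω ^ 2 * Real.exp (-(2 * Real.sqrt ω) * x) := by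
    intro x
    have h3 := psi_pos (γ := γ) hp hω x
    rw [Real.norm_eq_abs, abs_mul, abs_of_pos h3]
    calc psi γ p ω x * |Dpsi γ p ω x| ≤ psi γ p ω x * (Real.sqrt ω * psi γ p ω x) :=
          mul_le_mul_of_nonneg_left (abs_Dpsi_le hp hω x) h3.le
      _ = Real.sqrt ω * psi γ p ω x ^ 2 := by ring
      _ ≤ Real.sqrt ω * (Mc γ p ω * Real.exp (-Real.sqrt ω * x)) ^ 2 :=
          mul_le_mul_of_nonneg_left
            (pow_le_pow_left₀ h3.le (psi_le hp hω x) 2) hsw.le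
      _ = Real.sqrt ω * Mc γ p ω ^ 2 * Real.exp (-(2 * Real.sqrt ω) * x) := by
          rw [exp_sq_aux]; ring_nf
  have ht : Filter.Tendsto (fun x : ℝ => Real.exp (-(2 * Real.sqrt ω) * x)) atTop (nhds 0) := by
    have h1 : Filter.Tendsto (fun x : ℝ => 2 * Real.sqrt ω * x) atTop atTop :=
      Filter.Tendsto.const_mul_atTop (by positivity) Filter.tendsto_id
    have := Real.tendsto_exp_neg_atTop_nhds_zero.comp h1
    refine this.congr fun x => ?_
    simp [Function.comp, neg_mul]
  have := ht.const_mul (Real.sqrt ω * Mc γ p ω ^ 2)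
  rw [mul_zero] at this
  exact squeeze_zero_norm hb this

lemma tanh_artanh {m : ℝ} (h1 : -1 < m) (h2 : m < 1) :
    Real.sinh (_root_.artanh m) / Real.cosh (_root_.artanh m) = m := by
  have hL : 0 < (1 + m) / (1 - m) := div_pos (by linarith) (by linarith)
  have hE : Real.exp (_root_.artanh m) * Real.exp (_root_.artanh m) = (1 + m) / (1 - m) := by
    rw [← Real.exp_add]
    unfold _root_.artanh
    rw [show Real.log ((1 + m) / (1 - m)) / 2 + Real.log ((1 + m) / (1 - m)) / 2
        = Real.log ((1 + m) / (1 - m)) by ring, Real.exp_log hL]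
  have hexp := Real.exp_pos (_root_.artanh m)
  have hden : 0 < Real.exp (_root_.artanh m) + (Real.exp (_root_.artanh m))⁻¹ := by positivity
  have hm : (1 : ℝ) - m ≠ 0 := by linarith
  rw [Real.sinh_eq, Real.cosh_eq, Real.exp_neg]
  have hne2 : (Real.exp (_root_.artanh m) + (Real.exp (_root_.artanh m))⁻¹) / 2 ≠ 0 := by positivity
  rw [div_eq_iff hne2]
  field_simp
  rw [← sq] at hE; rw [hE]
  field_simp
  ring

lemma key_half (hγ : 0 < γ) (hp : 1 < p) (hω : γ ^ 2 / 4 < ω) :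
    ∫ x in Ioi (0:ℝ),
        (Dpsi γ p ω x ^ 2 + ω * psi γ p ω x ^ 2 - psi γ p ω x ^ (p + 1))
      = γ / 2 * psi γ p ω 0 ^ 2 := by
  have hω0 : 0 < ω := lt_of_le_of_lt (by positivity) hω
  have hsw : 0 < Real.sqrt ω := Real.sqrt_pos.2 hω0
  have hint : IntegrableOn
      (fun x => Dpsi γ p ω x ^ 2 + ω * psi γ p ω x ^ 2 - psi γ p ω x ^ (p + 1))
      (Set.Ioi 0) :=
    ((int_Dpsi_sq hp hω0).add ((int_psi_sq hp hω0).const_mul ω)).sub (int_psi_rpow hp hω0)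
  have hFTC := integral_Ioi_of_hasDerivAt_of_tendsto
    (f := fun y => psi γ p ω y * Dpsi γ p ω y) (a := 0) (m := 0)
    (((cont_psi hp hω0).mul (cont_Dpsi hp hω0)).continuousWithinAt)
    (fun x _ => hasDerivAt_h hp hω0 x) hint (tendsto_h hp hω0)
  rw [hFTC]
  -- now compute the boundary term
  have hm0 : 0 < γ / (2 * Real.sqrt ω) := by positivity
  have hm1 : γ / (2 * Real.sqrt ω) < 1 := by
    rw [div_lt_one (by positivity)]
    nlinarith [Real.sq_sqrt hω0.le, Real.sqrt_nonneg ω]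
  have ht := tanh_artanh (by linarith : (-1:ℝ) < γ / (2 * Real.sqrt ω)) hm1
  have huu0 : uu γ p ω 0 = _root_.artanh (γ / (2 * Real.sqrt ω)) := by simp [uu]
  show 0 - psi γ p ω 0 * Dpsi γ p ω 0 = _
  unfold Dpsi
  rw [huu0, ht]
  field_simp
  ring

lemma norm_phiC (hp : 1 < p) (hω : 0 < ω) (x : ℝ) :
    ‖phiC γ p ω x‖ = psi γ p ω |x| := by
  rw [phiC, Complex.norm_real, Real.norm_eq_abs, phi_eq hp hω,
    abs_of_pos (psi_pos hp hω |x|)]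

lemma deriv_phiC_ae (hp : 1 < p) (hω : 0 < ω) :
    ∀ᵐ x : ℝ, ‖deriv (phiC γ p ω) x‖ ^ 2 = Dpsi γ p ω |x| ^ 2 := by
  have h0 : ∀ᵐ x : ℝ, x ≠ 0 := by
    rw [MeasureTheory.ae_iff]
    have : {x : ℝ | ¬x ≠ 0} = {0} := by ext y; simp
    rw [this]
    exact Real.volume_singleton
  filter_upwards [h0] with x hx
  rcases lt_or_gt_of_ne hx with hneg | hpos
  · have hev : phiC γ p ω =ᶠ[nhds x] fun y => ((psi γ p ω (-y) : ℝ) : ℂ) := by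
      filter_upwards [Iio_mem_nhds hneg] with y hy
      simp only [phiC]
      rw [phi_eq hp hω, abs_of_neg hy]
    have hd : HasDerivAt (fun y : ℝ => psi γ p ω (-y)) (Dpsi γ p ω (-x) * (-1)) x :=
      (hasDerivAt_psi (γ := γ) hp hω (-x)).comp x (hasDerivAt_neg x)
    have hd2 : HasDerivAt (phiC γ p ω) ((Dpsi γ p ω (-x) * (-1) : ℝ) : ℂ) x :=
      (hd.ofReal_comp).congr_of_eventuallyEq hev
    rw [hd2.deriv, abs_of_neg hneg, Complex.norm_real, Real.norm_eq_abs,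
      mul_neg_one, abs_neg, sq_abs]
  · have hev : phiC γ p ω =ᶠ[nhds x] fun y => ((psi γ p ω y : ℝ) : ℂ) := by
      filter_upwards [Ioi_mem_nhds hpos] with y hy
      simp only [phiC]
      rw [phi_eq hp hω, abs_of_pos hy]
    have hd2 : HasDerivAt (phiC γ p ω) ((Dpsi γ p ω x : ℝ) : ℂ) x :=
      ((hasDerivAt_psi (γ := γ) hp hω x).ofReal_comp).congr_of_eventuallyEq hev
    rw [hd2.deriv, abs_of_pos hpos, Complex.norm_real, Real.norm_eq_abs, sq_abs]

end Stmt13Aux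

open Stmt13Aux in
/-- the Nehari and Pohozaev identities for `φ_ω`. -/
theorem stmt13 (γ p ω : ℝ) (hγ : 0 < γ) (hp : 1 < p) (hω : γ ^ 2 / 4 < ω) :
    Kfun γ p ω (phiC γ p ω) = 0 ∧ Pfun γ p (phiC γ p ω) = 0 := by
  have hω0 : 0 < ω := lt_of_le_of_lt (by positivity) hω
  have hG := int_Dpsi_sq (γ := γ) hp hω0
  have hI2 := int_psi_sq (γ := γ) hp hω0
  have hIp := int_psi_rpow (γ := γ) hp hω0
  -- half-line identities
  have hsplit : (∫ x in Ioi (0:ℝ), Dpsi γ p ω x ^ 2)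
      + ω * (∫ x in Ioi (0:ℝ), psi γ p ω x ^ 2)
      - (∫ x in Ioi (0:ℝ), psi γ p ω x ^ (p + 1))
      = γ / 2 * psi γ p ω 0 ^ 2 := by
    have hk := key_half hγ hp hω
    have hI2' : Integrable (fun x => ω * psi γ p ω x ^ 2) (volume.restrict (Ioi 0)) :=
      hI2.const_mul ω
    have hfg : Integrable (fun x => Dpsi γ p ω x ^ 2 + ω * psi γ p ω x ^ 2)
        (volume.restrict (Ioi 0)) := hG.add hI2'
    rw [integral_sub hfg hIp, integral_add hG hI2', integral_const_mul] at hk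
    exact hk
  have hA : (∫ x in Ioi (0:ℝ), Dpsi γ p ω x ^ 2)
      = ω * (∫ x in Ioi (0:ℝ), psi γ p ω x ^ 2)
        - 2 / (p + 1) * (∫ x in Ioi (0:ℝ), psi γ p ω x ^ (p + 1)) := by
    simp only [Dpsi_sq hp hω0]
    rw [integral_sub (hI2.const_mul ω) (hIp.const_mul (2 / (p + 1))),
      integral_const_mul, integral_const_mul]
  -- conversions to the full-line functionals
  have hGrad : gradSq (phiC γ p ω) = 2 * ∫ x in Ioi (0:ℝ), Dpsi γ p ω x ^ 2 := by
    unfold gradSq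
    rw [integral_congr_ae (deriv_phiC_ae hp hω0)]
    exact integral_comp_abs (f := fun t => Dpsi γ p ω t ^ 2)
  have hl2 : l2Sq (phiC γ p ω) = 2 * ∫ x in Ioi (0:ℝ), psi γ p ω x ^ 2 := by
    unfold l2Sq
    simp only [norm_phiC hp hω0]
    exact integral_comp_abs (f := fun t => psi γ p ω t ^ 2)
  have hlp : lpPow p (phiC γ p ω) = 2 * ∫ x in Ioi (0:ℝ), psi γ p ω x ^ (p + 1) := by
    unfold lpPow
    simp only [norm_phiC hp hω0]
    exact integral_comp_abs (f := fun t => psi γ p ω t ^ (p + 1))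
  have h00 : ‖phiC γ p ω 0‖ ^ 2 = psi γ p ω 0 ^ 2 := by
    rw [norm_phiC hp hω0, abs_zero]
  constructor
  · unfold Kfun
    rw [hGrad, hl2, hlp, h00]
    linarith [hsplit]
  · unfold Pfun
    rw [hGrad, hlp, h00]
    have hp1 : (p : ℝ) + 1 ≠ 0 := by nlinarith
    have hA' : (p + 1) * (∫ x in Ioi (0:ℝ), Dpsi γ p ω x ^ 2)
        = (p + 1) * ω * (∫ x in Ioi (0:ℝ), psi γ p ω x ^ 2)
          - 2 * (∫ x in Ioi (0:ℝ), psi γ p ω x ^ (p + 1)) := by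
      rw [hA]
      field_simp
    have hgoal : (p + 1) * (2 * ∫ x in Ioi (0:ℝ), Dpsi γ p ω x ^ 2)
        - (p + 1) * (γ / 2 * psi γ p ω 0 ^ 2)
        - (p - 1) * (∫ x in Ioi (0:ℝ), psi γ p ω x ^ (p + 1)) = 0 := by
      linear_combination (p + 1) * hsplit + hA'
    field_simp
    linear_combination 2 * hgoal
end
end

section
/- Let γ > 0, p > 5 and ω > γ²/4. Then E(φ_ω) > 0 if and only if ξ(ω,γ) < ξ₁(p), i.e., if and only if ω > ω₁(p,γ) := γ²/(4 ξ₁(p)²). -/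
open MeasureTheory Set
open scoped ENNReal

noncomputable section

namespace S15

open Filter Topology

lemma tanh_eq_exp (x : ℝ) :
    Real.tanh x = (Real.exp (2*x) - 1) / (Real.exp (2*x) + 1) := by
  have h1 : Real.exp (2*x) = Real.exp x * Real.exp x := by
    rw [← Real.exp_add]; ring_nf
  have h3 : (0:ℝ) < Real.exp x := Real.exp_pos x
  have h4 : (0:ℝ) < Real.exp (2*x) + 1 := by positivity
  have hc : (0:ℝ) < Real.cosh x := Real.cosh_pos x
  rw [Real.tanh_eq_sinh_div_cosh, Real.sinh_eq, Real.cosh_eq, Real.exp_neg, h1]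
  rw [div_eq_div_iff (by positivity) (by positivity)]
  field_simp

lemma tanh_mem_Ioo (x : ℝ) : Real.tanh x ∈ Ioo (-1:ℝ) 1 := by
  rw [tanh_eq_exp]
  have he : (0:ℝ) < Real.exp (2*x) := Real.exp_pos _
  constructor
  · rw [lt_div_iff₀ (by linarith)]; linarith
  · rw [div_lt_one (by linarith)]; linarith

lemma one_sub_tanh_sq_pos (x : ℝ) : 0 < 1 - Real.tanh x ^ 2 := by
  have h := tanh_mem_Ioo x
  nlinarith [h.1, h.2]

lemma hasDerivAt_tanh (x : ℝ) : HasDerivAt Real.tanh (1 - Real.tanh x ^ 2) x := by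
  have hc : (0:ℝ) < Real.cosh x := Real.cosh_pos x
  have h : HasDerivAt (fun y => Real.sinh y / Real.cosh y)
      ((Real.cosh x * Real.cosh x - Real.sinh x * Real.sinh x) / (Real.cosh x)^2) x :=
    (Real.hasDerivAt_sinh x).div (Real.hasDerivAt_cosh x) hc.ne'
  have heq : (fun y => Real.sinh y / Real.cosh y) = Real.tanh := by
    funext y; rw [Real.tanh_eq_sinh_div_cosh]
  rw [heq] at h
  convert h using 1
  rw [Real.tanh_eq_sinh_div_cosh]
  have h2 := Real.cosh_sq_sub_sinh_sq x
  field_simp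

lemma tanh_monotone : Monotone Real.tanh := by
  refine (strictMono_of_deriv_pos fun x => ?_).monotone
  rw [(hasDerivAt_tanh x).deriv]
  exact one_sub_tanh_sq_pos x

lemma tendsto_tanh_atTop : Tendsto Real.tanh atTop (𝓝 1) := by
  have h1 : Tendsto (fun x : ℝ => Real.exp (2*x)) atTop atTop :=
    Real.tendsto_exp_atTop.comp (tendsto_id.const_mul_atTop two_pos)
  have h2 : Tendsto (fun y : ℝ => (y-1)/(y+1)) atTop (𝓝 1) := by
    have h3 : Tendsto (fun y : ℝ => 1 - 2/(y+1)) atTop (𝓝 (1 - 0)) :=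
      tendsto_const_nhds.sub (tendsto_const_nhds.div_atTop
        (tendsto_atTop_add_const_right _ 1 tendsto_id))
    rw [sub_zero] at h3
    refine h3.congr' ?_
    filter_upwards [eventually_gt_atTop (0:ℝ)] with y hy
    field_simp
    ring
  have h := h2.comp h1
  exact h.congr fun x => (tanh_eq_exp x).symm

lemma tanh_artanh {x : ℝ} (h1 : -1 < x) (h2 : x < 1) : Real.tanh (artanh x) = x := by
  have hx1 : (0:ℝ) < 1 + x := by linarith
  have hx2 : (0:ℝ) < 1 - x := by linarith
  rw [tanh_eq_exp]
  have hl : 2 * artanh x = Real.log ((1+x)/(1-x)) := by unfold artanh; ring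
  rw [hl, Real.exp_log (by positivity)]
  rw [div_eq_iff]
  · field_simp; ring
  · have : (0:ℝ) < (1+x)/(1-x) := by positivity
    linarith

lemma sech_sq (x : ℝ) : (1 / Real.cosh x)^2 = 1 - Real.tanh x ^ 2 := by
  have hc : (0:ℝ) < Real.cosh x := Real.cosh_pos x
  rw [Real.tanh_eq_sinh_div_cosh]
  have h2 := Real.cosh_sq_sub_sinh_sq x
  field_simp
  exact h2.symm

lemma measurable_one_sub_sq_rpow (r : ℝ) : Measurable (fun s : ℝ => (1 - s^2) ^ r) :=
  (measurable_const.sub (measurable_id.pow_const 2)).pow measurable_const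

lemma intervalIntegrable_one_sub_sq {β c : ℝ} (hβ : 0 < β) (hc : -1 < c) (hc1 : c ≤ 1) :
    IntervalIntegrable (fun s : ℝ => (1 - s^2) ^ (β-1)) volume c 1 := by
  rw [intervalIntegrable_iff_integrableOn_Ioc_of_le hc1]
  set MM : ℝ := 2^(β-1) + (1+c)^(β-1) with hMM
  have hg : IntegrableOn (fun s : ℝ => MM * (1-s)^(β-1)) (Ioc c 1) volume := by
    have h1 : IntervalIntegrable (fun x : ℝ => x ^ (β-1)) volume (1-c) (1-1) :=
      intervalIntegral.intervalIntegrable_rpow' (by linarith)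
    have h2 := h1.comp_sub_left 1
    simp only [sub_sub_cancel] at h2
    rw [intervalIntegrable_iff_integrableOn_Ioc_of_le hc1] at h2
    exact h2.const_mul MM
  refine (hg.mono' ((measurable_one_sub_sq_rpow (β-1)).aestronglyMeasurable.restrict) ?_)
  rw [ae_restrict_iff' measurableSet_Ioc]
  refine Filter.Eventually.of_forall fun s hs => ?_
  have hs1 : c < s := hs.1
  have hs2 : s ≤ 1 := hs.2
  have h1s : 0 ≤ 1 - s := by linarith
  have h1s' : 0 < 1 + s := by linarith
  have hfac : (1:ℝ) - s^2 = (1-s) * (1+s) := by ring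
  rw [Real.norm_eq_abs, abs_of_nonneg (Real.rpow_nonneg (by nlinarith) _), hfac,
    Real.mul_rpow h1s h1s'.le]
  have hbound : (1+s) ^ (β-1) ≤ MM := by
    rcases le_total 1 β with hb | hb
    · have : (1+s) ^ (β-1) ≤ 2 ^ (β-1) :=
        Real.rpow_le_rpow h1s'.le (by linarith) (by linarith)
      exact this.trans (le_add_of_nonneg_right (Real.rpow_nonneg (by linarith) _))
    · have : (1+s) ^ (β-1) ≤ (1+c) ^ (β-1) :=
        Real.rpow_le_rpow_of_nonpos (by linarith) (by linarith) (by linarith)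
      exact this.trans (le_add_of_nonneg_left (Real.rpow_nonneg (by norm_num) _))
  calc (1-s)^(β-1) * (1+s)^(β-1) ≤ (1-s)^(β-1) * MM :=
        mul_le_mul_of_nonneg_left hbound (Real.rpow_nonneg h1s _)
    _ = MM * (1-s)^(β-1) := mul_comm _ _
lemma key (a b β : ℝ) (ha : 0 < a) (hβ : 0 < β) :
    IntegrableOn (fun x : ℝ => (1 - Real.tanh (a*x+b)^2) ^ β) (Ioi (0:ℝ)) ∧
    ∫ x in Ioi (0:ℝ), (1 - Real.tanh (a*x+b)^2) ^ β
      = (1/a) * ∫ s in Real.tanh b..1, (1 - s^2) ^ (β-1) := by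
  set f : ℝ → ℝ := fun s => (1 - s^2) ^ (β-1) with hf
  set G : ℝ → ℝ := fun x => (1/a) * ∫ s in Real.tanh b..Real.tanh (a*x+b), f s with hG
  have htb := tanh_mem_Ioo b
  have hderiv : ∀ x : ℝ, HasDerivAt G ((1 - Real.tanh (a*x+b)^2) ^ β) x := by
    intro x
    have htu := tanh_mem_Ioo (a*x+b)
    have hS : 0 < 1 - Real.tanh (a*x+b)^2 := one_sub_tanh_sq_pos _
    have hint : IntervalIntegrable f volume (Real.tanh b) (Real.tanh (a*x+b)) := by
      apply ContinuousOn.intervalIntegrable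
      intro s hs
      have hs' : s ∈ Ioo (-1:ℝ) 1 := Set.ordConnected_Ioo.uIcc_subset htb htu hs
      have hne : (1:ℝ) - s^2 ≠ 0 := by nlinarith [hs'.1, hs'.2]
      exact ((continuous_const.sub (continuous_pow 2)).continuousAt.rpow_const
        (Or.inl hne)).continuousWithinAt
    have hmeas : StronglyMeasurableAtFilter f (𝓝 (Real.tanh (a*x+b))) volume :=
      ⟨univ, univ_mem, (measurable_one_sub_sq_rpow (β-1)).aestronglyMeasurable.restrict⟩
    have hcontat : ContinuousAt f (Real.tanh (a*x+b)) :=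
      (continuous_const.sub (continuous_pow 2)).continuousAt.rpow_const (Or.inl hS.ne')
    have h1 : HasDerivAt (fun u => ∫ s in Real.tanh b..u, f s) (f (Real.tanh (a*x+b)))
        (Real.tanh (a*x+b)) :=
      intervalIntegral.integral_hasDerivAt_right hint hmeas hcontat
    have ha2 : HasDerivAt (fun x : ℝ => a*x+b) a x := by
      simpa using ((hasDerivAt_id x).const_mul a).add_const b
    have h2 : HasDerivAt (fun x : ℝ => Real.tanh (a*x+b))
        ((1 - Real.tanh (a*x+b)^2) * a) x := by
        have h := (hasDerivAt_tanh (a*x+b)).comp x ha2; exact h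
    have h3 := (h1.comp x h2).const_mul (1/a)
    convert h3 using 1
    case e'_4 | e'_5 | e'_8 => rfl
    have e1 : (1 - Real.tanh (a*x+b)^2) ^ β
        = (1 - Real.tanh (a*x+b)^2) ^ (β-1) * (1 - Real.tanh (a*x+b)^2) := by
      rw [← Real.rpow_add_one hS.ne' (β-1)]; norm_num
    show (1 - Real.tanh (a*x+b)^2) ^ β = 1/a * (f (Real.tanh (a*x+b)) * ((1 - Real.tanh (a*x+b)^2) * a))
    rw [hf, e1]
    field_simp
  have htend : Tendsto G atTop (𝓝 ((1/a) * ∫ s in Real.tanh b..1, f s)) := by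
    have hInt : IntegrableOn f (uIcc (Real.tanh b) 1) volume := by
      have h := intervalIntegrable_one_sub_sq hβ htb.1 htb.2.le
      rw [intervalIntegrable_iff_integrableOn_Ioc_of_le htb.2.le] at h
      rw [uIcc_of_le htb.2.le]
      exact (integrableOn_Icc_iff_integrableOn_Ioc).2 h
    have hP : ContinuousOn (fun u => ∫ s in Real.tanh b..u, f s) (uIcc (Real.tanh b) 1) :=
      intervalIntegral.continuousOn_primitive_interval hInt
    have hcw : ContinuousWithinAt (fun u => ∫ s in Real.tanh b..u, f s)
        (uIcc (Real.tanh b) 1) 1 := hP 1 right_mem_uIcc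
    have hin : Tendsto (fun x : ℝ => Real.tanh (a*x+b)) atTop
        (𝓝[uIcc (Real.tanh b) 1] 1) := by
      rw [tendsto_nhdsWithin_iff]
      constructor
      · exact tendsto_tanh_atTop.comp
          (tendsto_atTop_add_const_right _ b (tendsto_id.const_mul_atTop ha))
      · filter_upwards [eventually_ge_atTop (0:ℝ)] with x hx
        rw [uIcc_of_le htb.2.le]
        exact ⟨tanh_monotone (by nlinarith), (tanh_mem_Ioo _).2.le⟩
    exact (hcw.tendsto.comp hin).const_mul (1/a)
  have hnonneg : ∀ x ∈ Ioi (0:ℝ), 0 ≤ (1 - Real.tanh (a*x+b)^2) ^ β :=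
    fun x _ => Real.rpow_nonneg (one_sub_tanh_sq_pos _).le _
  have hG0 : G 0 = 0 := by
    rw [hG]
    simp
  constructor
  · exact integrableOn_Ioi_deriv_of_nonneg' (fun x _ => hderiv x) hnonneg htend
  · have h := integral_Ioi_of_hasDerivAt_of_nonneg' (fun x _ => hderiv x) hnonneg htend
    rw [h, hG0, sub_zero]
/-- The profile on the half-line, abstract parameters. -/
def psiF (a b M κ : ℝ) : ℝ → ℝ := fun y => (M * (1 - Real.tanh (a*y+b)^2)) ^ κ

lemma psiF_pos {a b M κ : ℝ} (hM : 0 < M) (y : ℝ) : 0 < psiF a b M κ y :=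
  Real.rpow_pos_of_pos (mul_pos hM (one_sub_tanh_sq_pos _)) _

lemma rpow_sq {w : ℝ} (κ α : ℝ) (hw : 0 ≤ w) (hα : κ * 2 = α) : (w^κ)^2 = w^α := by
  rw [← Real.rpow_natCast (w^κ) 2, ← Real.rpow_mul hw, ← hα]
  norm_num

lemma hasDerivAt_psiF (a b M κ : ℝ) (hM : 0 < M) (y : ℝ) :
    HasDerivAt (psiF a b M κ)
      (-(2*a*κ) * Real.tanh (a*y+b) * psiF a b M κ y) y := by
  have hS : 0 < 1 - Real.tanh (a*y+b)^2 := one_sub_tanh_sq_pos _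
  have hz : 0 < M * (1 - Real.tanh (a*y+b)^2) := mul_pos hM hS
  have h1 : HasDerivAt (fun y : ℝ => a*y+b) a y := by
    simpa using ((hasDerivAt_id y).const_mul a).add_const b
  have h2 : HasDerivAt (fun y : ℝ => Real.tanh (a*y+b))
      ((1 - Real.tanh (a*y+b)^2) * a) y := by
      have h := (hasDerivAt_tanh (a*y+b)).comp y h1; exact h
  have h3 := h2.pow 2
  have h4 := (h3.const_sub 1).const_mul M
  have h5 : HasDerivAt (fun z : ℝ => z ^ κ)
      (κ * (M * (1 - Real.tanh (a*y+b)^2)) ^ (κ-1)) (M * (1 - Real.tanh (a*y+b)^2)) :=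
    Real.hasDerivAt_rpow_const (Or.inl hz.ne')
  have h6 := h5.comp y h4
  have e1 : (M * (1 - Real.tanh (a*y+b)^2)) ^ κ
      = (M * (1 - Real.tanh (a*y+b)^2)) ^ (κ-1) * (M * (1 - Real.tanh (a*y+b)^2)) := by
    rw [← Real.rpow_add_one hz.ne' (κ-1)]; norm_num
  convert h6 using 1
  case e'_4 | e'_5 | e'_8 => rfl
  show -(2*a*κ) * Real.tanh (a*y+b) * psiF a b M κ y
      = κ * (M * (1 - Real.tanh (a*y+b)^2)) ^ (κ-1)
        * (M * -(2 * Real.tanh (a*y+b) ^ (2-1) * ((1 - Real.tanh (a*y+b)^2) * a)))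
  show -(2*a*κ) * Real.tanh (a*y+b) * (M * (1 - Real.tanh (a*y+b)^2)) ^ κ = _
  rw [e1]
  ring

lemma lp_compute (a b M κ α q : ℝ) (ha : 0 < a) (hM : 0 < M) (hq : κ * q = α + 1)
    (hα : 0 < α) (F : ℝ → ℂ) (hF : ∀ x, F x = ((psiF a b M κ |x| : ℝ) : ℂ)) :
    ∫ x : ℝ, ‖F x‖ ^ q
      = 2 * (M^(α+1) * ((1/a) * ∫ s in Real.tanh b..1, (1-s^2)^α)) := by
  have hpt : ∀ x : ℝ, ‖F x‖ ^ q
      = M^(α+1) * (1 - Real.tanh (a*|x|+b)^2)^(α+1) := by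
    intro x
    have hS : 0 < 1 - Real.tanh (a*|x|+b)^2 := one_sub_tanh_sq_pos _
    have hz : 0 < M * (1 - Real.tanh (a*|x|+b)^2) := mul_pos hM hS
    rw [hF, Complex.norm_real, Real.norm_eq_abs, abs_of_pos (psiF_pos hM _)]
    show ((M * (1 - Real.tanh (a*|x|+b)^2)) ^ κ) ^ q = M^(α+1) * (1 - Real.tanh (a*|x|+b)^2)^(α+1)
    rw [← Real.rpow_mul hz.le, hq, Real.mul_rpow hM.le hS.le]
  simp only [hpt]
  rw [integral_comp_abs
    (f := fun y => M^(α+1) * (1 - Real.tanh (a*y+b)^2)^(α+1))]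
  rw [integral_const_mul, (key a b (α+1) ha (by linarith)).2]
  simp only [add_sub_cancel_right]

lemma norm0_compute (a b M κ α : ℝ) (hM : 0 < M) (hα : κ * 2 = α) (F : ℝ → ℂ)
    (hF : ∀ x, F x = ((psiF a b M κ |x| : ℝ) : ℂ)) :
    ‖F 0‖ ^ 2 = M^α * (1 - Real.tanh b^2)^α := by
  have hS : 0 < 1 - Real.tanh b^2 := one_sub_tanh_sq_pos _
  have hz : 0 < M * (1 - Real.tanh b^2) := mul_pos hM hS
  rw [hF, Complex.norm_real, Real.norm_eq_abs, abs_of_pos (psiF_pos hM _)]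
  show psiF a b M κ |0| ^ 2 = M^α * (1 - Real.tanh b^2)^α
  have : psiF a b M κ |0| = (M * (1 - Real.tanh b^2)) ^ κ := by
    show (M * (1 - Real.tanh (a*|(0:ℝ)|+b)^2)) ^ κ = _
    norm_num
  rw [this, rpow_sq κ α hz.le hα, Real.mul_rpow hM.le hS.le]

lemma alg1 (c T S Mα α : ℝ) (hS : S ≠ 0) (hT : T^2 = 1 - S) :
    c * T^2 * (Mα * S^α) = c * Mα * (S^α - S^(α+1)) := by
  rw [hT, Real.rpow_add_one hS α]; ring

lemma grad_compute (a b M κ α : ℝ) (ha : 0 < a) (hM : 0 < M) (hα : κ * 2 = α)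
    (hα0 : 0 < α) (F : ℝ → ℂ) (hF : F = fun x => ((psiF a b M κ |x| : ℝ) : ℂ)) :
    gradSq F = 4*a^2*κ^2*M^α *
      ((2/a) * ((∫ s in Real.tanh b..1, (1-s^2)^(α-1)) - ∫ s in Real.tanh b..1, (1-s^2)^α)) := by
  have hae : ∀ x : ℝ, x ≠ 0 → ‖deriv F x‖^2
      = 4*a^2*κ^2*M^α * ((1 - Real.tanh (a*|x|+b)^2)^α - (1 - Real.tanh (a*|x|+b)^2)^(α+1)) := by
    intro x hx
    have hS : 0 < 1 - Real.tanh (a*|x|+b)^2 := one_sub_tanh_sq_pos _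
    have hz : 0 < M * (1 - Real.tanh (a*|x|+b)^2) := mul_pos hM hS
    obtain ⟨d, hd, hdsq⟩ : ∃ d : ℝ, HasDerivAt (fun x : ℝ => psiF a b M κ |x|) d x ∧
        d^2 = 4*a^2*κ^2 * (Real.tanh (a*|x|+b))^2 * (psiF a b M κ |x|)^2 := by
      rcases hx.lt_or_gt with hneg | hpos
      · refine ⟨-(2*a*κ) * Real.tanh (a*(-x)+b) * psiF a b M κ (-x) * (-1), ?_, ?_⟩
        · have h := (hasDerivAt_psiF a b M κ hM (-x)).comp x (hasDerivAt_neg x)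
          refine h.congr_of_eventuallyEq ?_
          filter_upwards [Iio_mem_nhds hneg] with y hy
          show psiF a b M κ |y| = (psiF a b M κ ∘ fun y => -y) y
          simp only [Function.comp_apply]
          rw [abs_of_neg hy]
        · rw [abs_of_neg hneg]; ring
      · refine ⟨-(2*a*κ) * Real.tanh (a*x+b) * psiF a b M κ x, ?_, ?_⟩
        · have h := hasDerivAt_psiF a b M κ hM x
          refine h.congr_of_eventuallyEq ?_
          filter_upwards [Ioi_mem_nhds hpos] with y hy
          show psiF a b M κ |y| = psiF a b M κ y
          rw [abs_of_pos hy]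
        · rw [abs_of_pos hpos]; ring
    have hdF : deriv F x = (d : ℂ) := by
      rw [hF]; exact (hd.ofReal_comp).deriv
    rw [hdF, Complex.norm_real, Real.norm_eq_abs, sq_abs, hdsq]
    have e2 : psiF a b M κ |x| ^ 2 = M^α * (1 - Real.tanh (a*|x|+b)^2)^α := by
      show ((M * (1 - Real.tanh (a*|x|+b)^2)) ^ κ)^2 = _
      rw [rpow_sq κ α hz.le hα, Real.mul_rpow hM.le hS.le]
    rw [e2]
    exact alg1 _ _ _ _ α hS.ne' (by ring)
  have h0 : ∀ᵐ (x : ℝ) ∂volume, x ≠ 0 := by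
    filter_upwards [compl_mem_ae_iff.2 (measure_singleton (0:ℝ))] with x hx
    simpa using hx
  have haeq : (fun x => ‖deriv F x‖^2) =ᵐ[volume] (fun x =>
      (fun y => 4*a^2*κ^2*M^α * ((1 - Real.tanh (a*y+b)^2)^α - (1 - Real.tanh (a*y+b)^2)^(α+1))) |x|) := by
    filter_upwards [h0] with x hx using hae x hx
  rw [gradSq, integral_congr_ae haeq]
  rw [integral_comp_abs
    (f := fun y => 4*a^2*κ^2*M^α * ((1 - Real.tanh (a*y+b)^2)^α - (1 - Real.tanh (a*y+b)^2)^(α+1)))]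
  have h1 := key a b α ha hα0
  have h2 := key a b (α+1) ha (by linarith)
  rw [integral_const_mul, integral_sub h1.1 h2.1, h1.2, h2.2]
  simp only [add_sub_cancel_right]
  ring
lemma cont_rpow_all (α : ℝ) (hα : 0 ≤ α) : Continuous (fun s : ℝ => (1 - s^2) ^ α) := by
  rw [continuous_iff_continuousAt]
  intro s
  exact (continuous_const.sub (continuous_pow 2)).continuousAt.rpow_const (Or.inr hα)

lemma ibp (α ξ : ℝ) (hα : 0 < α) (hξ0 : 0 < ξ) (hξ1 : ξ < 1) :
    2*α*(∫ s in ξ..1, (1-s^2)^(α-1))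
      = (1+2*α)*(∫ s in ξ..1, (1-s^2)^α) + ξ*(1-ξ^2)^α := by
  have hcont : ContinuousOn (fun s : ℝ => s * (1-s^2)^α) (Icc ξ 1) :=
    (continuous_id.mul (cont_rpow_all α hα.le)).continuousOn
  have hderiv : ∀ s ∈ Ioo ξ 1, HasDerivAt (fun s : ℝ => s * (1-s^2)^α)
      ((1+2*α)*(1-s^2)^α - 2*α*(1-s^2)^(α-1)) s := by
    intro s hs
    have hS : 0 < 1 - s^2 := by nlinarith [hs.1, hs.2]
    have hin : HasDerivAt (fun s : ℝ => 1 - s^2) (-(2*s^(2-1))) s :=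
      (hasDerivAt_pow 2 s).const_sub 1
    have hr : HasDerivAt (fun s : ℝ => (1-s^2)^α) (α * (1-s^2)^(α-1) * (-(2*s^(2-1)))) s := by
      have h5 : HasDerivAt (fun z : ℝ => z ^ α) (α * (1-s^2)^(α-1)) (1-s^2) :=
        Real.hasDerivAt_rpow_const (Or.inl hS.ne')
      exact h5.comp s hin
    have hg := (hasDerivAt_id s).mul hr
    convert hg using 1
    case e'_4 | e'_5 | e'_8 => rfl
    have e : (1-s^2)^α = (1-s^2)^(α-1) * (1-s^2) := by
      rw [← Real.rpow_add_one hS.ne' (α-1)]; norm_num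
    rw [e]
    simp only [id_eq, pow_one]
    ring
  have hi1 : IntervalIntegrable (fun s : ℝ => (1-s^2)^α) volume ξ 1 :=
    (cont_rpow_all α hα.le).intervalIntegrable ξ 1
  have hi2 : IntervalIntegrable (fun s : ℝ => (1-s^2)^(α-1)) volume ξ 1 :=
    intervalIntegrable_one_sub_sq hα (by linarith) hξ1.le
  have hint : IntervalIntegrable
      (fun s : ℝ => (1+2*α)*(1-s^2)^α - 2*α*(1-s^2)^(α-1)) volume ξ 1 :=
    (hi1.const_mul _).sub (hi2.const_mul _)
  have hftc := intervalIntegral.integral_eq_sub_of_hasDeriv_right_of_le hξ1.le hcont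
    (fun s hs => (hderiv s hs).hasDerivWithinAt) hint
  rw [intervalIntegral.integral_sub (hi1.const_mul _) (hi2.const_mul _),
    intervalIntegral.integral_const_mul, intervalIntegral.integral_const_mul] at hftc
  have hg1 : (1:ℝ) * (1-(1:ℝ)^2)^α = 0 := by
    norm_num
    exact Real.zero_rpow hα.ne'
  rw [hg1] at hftc  -- maybe shape differs; adjust below
  linarith [hftc]
lemma phi_repr (γ p ω : ℝ) :
    phiC γ p ω = fun x => ((psiF ((p-1)*Real.sqrt ω/2) (artanh (γ/(2*Real.sqrt ω)))
      ((p+1)*ω/2) (1/(p-1)) |x| : ℝ) : ℂ) := by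
  funext x
  show ((phi γ p ω x : ℝ) : ℂ) = _
  congr 1
  show phi γ p ω x
      = (((p+1)*ω/2) * (1 - Real.tanh ((p-1)*Real.sqrt ω/2 * |x|
          + artanh (γ/(2*Real.sqrt ω)))^2)) ^ (1/(p-1))
  unfold phi
  rw [sech_sq]

lemma En_phi (γ p ω : ℝ) (hγ : 0 < γ) (hp : 5 < p) (hω : γ^2/4 < ω) :
    En γ p (phiC γ p ω)
      = (((p+1)*ω/2) ^ (2/(p-1)) * Real.sqrt ω / 2) *
        ((p-5)/(p-1) * (∫ s in (γ/(2*Real.sqrt ω))..1, (1-s^2) ^ (2/(p-1)))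
          - γ/(2*Real.sqrt ω) * (1 - (γ/(2*Real.sqrt ω))^2) ^ (2/(p-1))) := by
  have hω0 : 0 < ω := lt_of_le_of_lt (by positivity) hω
  have hsω : 0 < Real.sqrt ω := Real.sqrt_pos.2 hω0
  have hp1 : (0:ℝ) < p - 1 := by linarith
  have ha : 0 < (p-1)*Real.sqrt ω/2 := by positivity
  have hM : 0 < (p+1)*ω/2 := by positivity
  have hξ0 : 0 < γ/(2*Real.sqrt ω) := by positivity
  have hγlt : γ < 2*Real.sqrt ω := by
    nlinarith [Real.sq_sqrt hω0.le, Real.sqrt_nonneg ω]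
  have hξ1 : γ/(2*Real.sqrt ω) < 1 := by
    rw [div_lt_one (by positivity)]; exact hγlt
  have htanh : Real.tanh (artanh (γ/(2*Real.sqrt ω))) = γ/(2*Real.sqrt ω) :=
    tanh_artanh (by linarith) hξ1
  have hα0 : 0 < 2/(p-1) := by positivity
  have hκ2 : (1/(p-1)) * 2 = 2/(p-1) := by ring
  have hκq : (1/(p-1)) * (p+1) = 2/(p-1) + 1 := by field_simp; ring
  have hrepr := phi_repr γ p ω
  have hgrad := grad_compute ((p-1)*Real.sqrt ω/2) (artanh (γ/(2*Real.sqrt ω)))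
      ((p+1)*ω/2) (1/(p-1)) (2/(p-1)) ha hM hκ2 hα0 _ hrepr
  have hlp := lp_compute ((p-1)*Real.sqrt ω/2) (artanh (γ/(2*Real.sqrt ω)))
      ((p+1)*ω/2) (1/(p-1)) (2/(p-1)) (p+1) ha hM hκq hα0 _ (fun x => congrFun hrepr x)
  have h0 := norm0_compute ((p-1)*Real.sqrt ω/2) (artanh (γ/(2*Real.sqrt ω)))
      ((p+1)*ω/2) (1/(p-1)) (2/(p-1)) hM hκ2 _ (fun x => congrFun hrepr x)
  have hibp := ibp (2/(p-1)) (γ/(2*Real.sqrt ω)) hα0 hξ0 hξ1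
  rw [htanh] at hgrad hlp h0
  simp only [En, lpPow]
  rw [hgrad, hlp, h0]
  have hImeq : (∫ s in (γ/(2*Real.sqrt ω))..1, (1-s^2) ^ (2/(p-1)-1))
      = ((1+2*(2/(p-1)))*(∫ s in (γ/(2*Real.sqrt ω))..1, (1-s^2) ^ (2/(p-1)))
          + (γ/(2*Real.sqrt ω))*(1-(γ/(2*Real.sqrt ω))^2)^(2/(p-1)))/(2*(2/(p-1))) := by
    rw [eq_div_iff (by positivity)]
    linarith [hibp]
  rw [hImeq]
  have hMe : ((p+1)*ω/2) ^ (2/(p-1)+1) = ((p+1)*ω/2) ^ (2/(p-1)) * ((p+1)*ω/2) :=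
    Real.rpow_add_one hM.ne' _
  rw [hMe]
  set w := Real.sqrt ω with hw
  have hωw : ω = w*w := (Real.mul_self_sqrt hω0.le).symm
  rw [hωw]
  have hγe : γ = (γ/(2*w))*(2*w) := by field_simp
  rw [show γ/2 = ((γ/(2*w))*(2*w))/2 from by rw [← hγe]]
  set ξ := γ/(2*w) with hξ
  set A := ((p+1)*(w*w)/2) ^ (2/(p-1)) with hA
  set I := ∫ s in ξ..1, (1-s^2) ^ (2/(p-1)) with hI
  set Q := (1-ξ^2) ^ (2/(p-1)) with hQ
  field_simp
  ring
def Ffun (p : ℝ) : ℝ → ℝ := fun t =>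
  (p-5)/(p-1) * (∫ s in t..1, (1-s^2) ^ (2/(p-1))) - t*(1-t^2) ^ (2/(p-1))

lemma prim_hasDerivAt (α : ℝ) (hα : 0 < α) (t : ℝ) :
    HasDerivAt (fun t : ℝ => ∫ s in t..1, (1-s^2) ^ α) (-((1-t^2) ^ α)) t := by
  have hc := cont_rpow_all α hα.le
  have h : HasDerivAt (fun u : ℝ => ∫ s in (1:ℝ)..u, (1-s^2) ^ α) ((1-t^2) ^ α) t :=
    intervalIntegral.integral_hasDerivAt_right (hc.intervalIntegrable 1 t)
      ⟨univ, univ_mem, (measurable_one_sub_sq_rpow α).aestronglyMeasurable.restrict⟩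
      hc.continuousAt
  have h2 := h.neg
  refine h2.congr_of_eventuallyEq (Filter.Eventually.of_forall fun u => ?_)
  show (∫ s in u..1, (1-s^2) ^ α) = -∫ s in (1:ℝ)..u, (1-s^2) ^ α
  exact intervalIntegral.integral_symm 1 u

lemma Ffun_hasDerivAt (p : ℝ) (hp : 5 < p) {t : ℝ} (h1 : -1 < t) (h2 : t < 1) :
    HasDerivAt (Ffun p) (2*(1-t^2) ^ (2/(p-1)-1)*(t^2 - (1 - 2/(p-1)))) t := by
  have hp1 : (0:ℝ) < p - 1 := by linarith
  have hα0 : 0 < 2/(p-1) := by positivity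
  have hS : 0 < 1 - t^2 := by nlinarith
  have hA := (prim_hasDerivAt (2/(p-1)) hα0 t).const_mul ((p-5)/(p-1))
  have hin : HasDerivAt (fun s : ℝ => 1 - s^2) (-(2*t^(2-1))) t :=
    (hasDerivAt_pow 2 t).const_sub 1
  have hr : HasDerivAt (fun s : ℝ => (1-s^2) ^ (2/(p-1)))
      (2/(p-1) * (1-t^2) ^ (2/(p-1)-1) * (-(2*t^(2-1)))) t :=
    by have h := (Real.hasDerivAt_rpow_const (p := 2/(p-1)) (Or.inl hS.ne')).comp t hin; exact h
  have hB := (hasDerivAt_id t).mul hr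
  have hAB := hA.sub hB
  convert hAB using 1
  case e'_4 | e'_5 | e'_8 => rfl
  have e : (1-t^2) ^ (2/(p-1)) = (1-t^2) ^ (2/(p-1)-1) * (1-t^2) := by
    rw [← Real.rpow_add_one hS.ne' (2/(p-1)-1)]; norm_num
  rw [e]
  simp only [id_eq, pow_one]
  field_simp
  ring

lemma Ffun_cont (p : ℝ) (hp : 5 < p) : Continuous (Ffun p) := by
  have hp1 : (0:ℝ) < p - 1 := by linarith
  have hα0 : 0 < 2/(p-1) := by positivity
  have h1 : Continuous (fun t : ℝ => ∫ s in t..1, (1-s^2) ^ (2/(p-1))) := by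
    rw [continuous_iff_continuousAt]
    exact fun t => (prim_hasDerivAt (2/(p-1)) hα0 t).continuousAt
  exact (continuous_const.mul h1).sub (continuous_id.mul (cont_rpow_all _ hα0.le))

lemma Ffun_one (p : ℝ) (hp : 5 < p) : Ffun p 1 = 0 := by
  have hp1 : (0:ℝ) < p - 1 := by linarith
  have hα0 : 0 < 2/(p-1) := by positivity
  unfold Ffun
  rw [intervalIntegral.integral_same]
  norm_num
  exact Real.zero_rpow hα0.ne'

lemma Ffun_pos_iff (p : ℝ) (hp : 5 < p) (ξ1 : ℝ) (hξ : ξ1 ∈ Ioo (0:ℝ) 1)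
    (h0 : Ffun p ξ1 = 0) (t : ℝ) (ht : t ∈ Ioo (0:ℝ) 1) :
    0 < Ffun p t ↔ t < ξ1 := by
  have hp1 : (0:ℝ) < p - 1 := by linarith
  have hα0 : 0 < 2/(p-1) := by positivity
  have hα1 : 2/(p-1) < 1 := by rw [div_lt_one hp1]; linarith
  set τ := Real.sqrt (1 - 2/(p-1)) with hτ
  have hτsq : τ^2 = 1 - 2/(p-1) := Real.sq_sqrt (by linarith)
  have hτpos : 0 < τ := Real.sqrt_pos.2 (by linarith)
  have hτlt1 : τ < 1 := by nlinarith
  have hanti : StrictAntiOn (Ffun p) (Icc 0 τ) := by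
    refine strictAntiOn_of_deriv_neg (convex_Icc _ _) (Ffun_cont p hp).continuousOn ?_
    intro s hs
    rw [interior_Icc] at hs
    have hs1 : 0 < s := hs.1
    have hs2 : s < τ := hs.2
    have hs3 : s < 1 := lt_trans hs2 hτlt1
    rw [(Ffun_hasDerivAt p hp (by linarith) hs3).deriv]
    have hY : 0 < (1-s^2) ^ (2/(p-1)-1) := Real.rpow_pos_of_pos (by nlinarith) _
    have hneg : s^2 - (1 - 2/(p-1)) < 0 := by nlinarith
    have hh := mul_pos hY (neg_pos.2 hneg)
    nlinarith
  have hmono : StrictMonoOn (Ffun p) (Icc τ 1) := by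
    refine strictMonoOn_of_deriv_pos (convex_Icc _ _) (Ffun_cont p hp).continuousOn ?_
    intro s hs
    rw [interior_Icc] at hs
    have hs1 : τ < s := hs.1
    have hs2 : s < 1 := hs.2
    rw [(Ffun_hasDerivAt p hp (by nlinarith) hs2).deriv]
    have hY : 0 < (1-s^2) ^ (2/(p-1)-1) := Real.rpow_pos_of_pos (by nlinarith) _
    have hposq : 0 < s^2 - (1 - 2/(p-1)) := by nlinarith
    have hh := mul_pos hY hposq
    nlinarith
  have hξτ : ξ1 < τ := by
    by_contra hcon
    push_neg at hcon
    have h := hmono (mem_Icc.2 ⟨hcon, hξ.2.le⟩) (mem_Icc.2 ⟨hτlt1.le, le_refl 1⟩) hξ.2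
    rw [Ffun_one p hp, h0] at h
    exact lt_irrefl 0 h
  constructor
  · intro hFt
    by_contra hcon
    push_neg at hcon
    rcases eq_or_lt_of_le hcon with heq | hlt
    · rw [← heq, h0] at hFt; exact lt_irrefl 0 hFt
    · rcases le_or_gt t τ with htτ | hτt
      · have h := hanti (mem_Icc.2 ⟨hξ.1.le, hξτ.le⟩) (mem_Icc.2 ⟨ht.1.le, htτ⟩) hlt
        rw [h0] at h
        linarith
      · have h := hmono (mem_Icc.2 ⟨hτt.le, ht.2.le⟩) (mem_Icc.2 ⟨hτlt1.le, le_refl 1⟩) ht.2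
        rw [Ffun_one p hp] at h
        linarith
  · intro hlt
    have h := hanti (mem_Icc.2 ⟨ht.1.le, (lt_trans hlt hξτ).le⟩)
      (mem_Icc.2 ⟨hξ.1.le, hξτ.le⟩) hlt
    rw [h0] at h
    linarith
theorem main (γ p ω : ℝ) (hγ : 0 < γ) (hp : 5 < p) (hω : γ ^ 2 / 4 < ω)
    (ξ1 : ℝ) (hξ1 : ξ1 ∈ Ioo (0:ℝ) 1)
    (hξ1eq : (p - 5) / (p - 1) * ∫ s in ξ1..1, (1 - s ^ 2) ^ (2 / (p - 1)) =
      ξ1 * (1 - ξ1 ^ 2) ^ (2 / (p - 1))) :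
    (0 < En γ p (phiC γ p ω) ↔ γ / (2 * Real.sqrt ω) < ξ1) ∧
    (γ / (2 * Real.sqrt ω) < ξ1 ↔ γ ^ 2 / (4 * ξ1 ^ 2) < ω) := by
  have hω0 : 0 < ω := lt_of_le_of_lt (by positivity) hω
  have hsω : 0 < Real.sqrt ω := Real.sqrt_pos.2 hω0
  have hp1 : (0:ℝ) < p - 1 := by linarith
  have hξ0 : 0 < γ/(2*Real.sqrt ω) := by positivity
  have hγlt : γ < 2*Real.sqrt ω := by
    nlinarith [Real.sq_sqrt hω0.le, Real.sqrt_nonneg ω]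
  have hξlt1 : γ/(2*Real.sqrt ω) < 1 := by
    rw [div_lt_one (by positivity)]; exact hγlt
  have h0 : Ffun p ξ1 = 0 := sub_eq_zero_of_eq hξ1eq
  constructor
  · rw [En_phi γ p ω hγ hp hω]
    have hpre : 0 < ((p+1)*ω/2) ^ (2/(p-1)) * Real.sqrt ω / 2 := by
      have : (0:ℝ) < ((p+1)*ω/2) ^ (2/(p-1)) := Real.rpow_pos_of_pos (by positivity) _
      positivity
    have hiff := Ffun_pos_iff p hp ξ1 hξ1 h0 (γ/(2*Real.sqrt ω)) ⟨hξ0, hξlt1⟩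
    rw [← hiff]
    unfold Ffun
    constructor
    · intro h
      by_contra hcon
      push_neg at hcon
      nlinarith
    · intro h
      exact mul_pos hpre h
  · rw [div_lt_iff₀ (by positivity), div_lt_iff₀ (by have := hξ1.1; positivity)]
    have hs := Real.sq_sqrt hω0.le
    have hξp := hξ1.1
    constructor
    · intro h
      have h2 := mul_self_lt_mul_self hγ.le h
      nlinarith [hs]
    · intro h
      by_contra hcon
      push_neg at hcon
      have hnn : 0 ≤ ξ1*(2*Real.sqrt ω) := by positivity
      have h2 := mul_self_le_mul_self hnn hcon
      nlinarith [hs]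
end S15

/-- `E(φ_ω) > 0` iff `ξ(ω,γ) < ξ₁(p)` iff `ω > ω₁(p,γ)`. -/
theorem stmt15 (γ p ω : ℝ) (hγ : 0 < γ) (hp : 5 < p) (hω : γ ^ 2 / 4 < ω)
    (ξ1 : ℝ) (hξ1 : ξ1 ∈ Ioo (0:ℝ) 1)
    (hξ1eq : (p - 5) / (p - 1) * ∫ s in ξ1..1, (1 - s ^ 2) ^ (2 / (p - 1)) =
      ξ1 * (1 - ξ1 ^ 2) ^ (2 / (p - 1))) :
    (0 < En γ p (phiC γ p ω) ↔ γ / (2 * Real.sqrt ω) < ξ1) ∧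
    (γ / (2 * Real.sqrt ω) < ξ1 ↔ γ ^ 2 / (4 * ξ1 ^ 2) < ω) := by
  exact S15.main γ p ω hγ hp hω ξ1 hξ1 hξ1eq
end
end
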